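/- Let a₁ > a₂ > 0 and μ > 0. Let γ = {(x₁,x₂) : x₁²/a₁² + x₂²/a₂² = 1} and let P = (p₁, p₂) lie on the confocal ellipse Γ_μ = {(x₁,x₂) : x₁²/(a₁² + μ) + x₂²/(a₂² + μ) = 1} (so P is outside γ). Let A = (A₁, A₂) and B = (B₁, B₂) be distinct points of γ with ⟪P − A, (A₁/a₁², A₂/a₂²)⟫ = 0 and ⟪P − B, (B₁/a₁², B₂/a₂²)⟫ = 0 (i.e., PA and PB are the two tangent lines from P to γ). Let N = (p₁/(a₁² + μ), p₂/(a₂² + μ)) be the normal vector to Γ_μ at P. Then ⟪(A − P)/‖A − P‖, N⟫ = ⟪(B − P)/‖B − P‖, N⟫; that is, the normal to the confocal ellipse Γ_μ at P bisects the angle between the two tangent segments from P to γ, so the two tangent lines make equal angles with Γ_μ. -/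

import Mathlib

lemma ip_nonpos (d1 d2 m1 m2 A0 A1 p0 p1 : ℝ) (hd1 : 0 < d1) (hd2 : 0 < d2)
    (h1 : d1 ≤ m1) (h2 : d2 ≤ m2) (f4 : d1 * p0 ^ 2 + d2 * p1 ^ 2 = 1)
    (hA' : m1 * A0 ^ 2 + m2 * A1 ^ 2 = 1) :
    d1 * A0 * p0 + d2 * A1 * p1 - 1 ≤ 0 := by
  nlinarith [mul_nonneg hd1.le (sq_nonneg (A0 - p0)), mul_nonneg hd2.le (sq_nonneg (A1 - p1)),
    mul_nonneg (sub_nonneg.mpr h1) (sq_nonneg A0), mul_nonneg (sub_nonneg.mpr h2) (sq_nonneg A1)]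

lemma ellipses_disjoint (d1 d2 m1 m2 A0 A1 : ℝ) (h1 : d1 < m1) (h2 : d2 < m2)
    (f4 : d1 * A0 ^ 2 + d2 * A1 ^ 2 = 1)
    (hA' : m1 * A0 ^ 2 + m2 * A1 ^ 2 = 1) : False := by
  have E : (m1 - d1) * A0 ^ 2 + (m2 - d2) * A1 ^ 2 = 0 := by linear_combination hA' - f4
  have t1 : 0 ≤ (m1 - d1) * A0 ^ 2 := mul_nonneg (sub_nonneg.mpr h1.le) (sq_nonneg A0)
  have t2 : 0 ≤ (m2 - d2) * A1 ^ 2 := mul_nonneg (sub_nonneg.mpr h2.le) (sq_nonneg A1)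
  have e1 : (m1 - d1) * A0 ^ 2 = 0 := by linarith
  have e2 : (m2 - d2) * A1 ^ 2 = 0 := by linarith
  have hA0 : A0 ^ 2 = 0 := (mul_eq_zero.mp e1).resolve_left (sub_pos.mpr h1).ne'
  have hA1 : A1 ^ 2 = 0 := (mul_eq_zero.mp e2).resolve_left (sub_pos.mpr h2).ne'
  rw [hA0, hA1] at hA'
  norm_num at hA'

set_option maxHeartbeats 1000000 in
lemma confocal_aux (a₁ a₂ mu p0 p1 A0 A1 : ℝ) (ha : a₂ < a₁) (ha₂ : 0 < a₂) (hmu : 0 < mu)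
    (hP : p0 ^ 2 / (a₁ ^ 2 + mu) + p1 ^ 2 / (a₂ ^ 2 + mu) = 1)
    (hA : A0 ^ 2 / a₁ ^ 2 + A1 ^ 2 / a₂ ^ 2 = 1)
    (htan : (p0 - A0) * (A0 / a₁ ^ 2) + (p1 - A1) * (A1 / a₂ ^ 2) = 0) :
    ((A0 - p0) * (p0 / (a₁ ^ 2 + mu)) + (A1 - p1) * (p1 / (a₂ ^ 2 + mu))) ^ 2
      = ((a₁ ^ 2 + mu)⁻¹ * (a₂ ^ 2 + mu)⁻¹ * p0 ^ 2 + ((a₂ ^ 2 + mu)⁻¹) ^ 2 * p1 ^ 2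
          - (a₁ ^ 2 + mu)⁻¹ * (a₂ ^ 2 + mu)⁻¹ * a₁ ^ 2) * ((A0 - p0) ^ 2 + (A1 - p1) ^ 2)
    ∧ ((A0 - p0) * (p0 / (a₁ ^ 2 + mu)) + (A1 - p1) * (p1 / (a₂ ^ 2 + mu))) ≤ 0
    ∧ 0 < (A0 - p0) ^ 2 + (A1 - p1) ^ 2 := by
  have ha₁ : 0 < a₁ := ha₂.trans ha
  have h1 : (0:ℝ) < a₁ ^ 2 + mu := by positivity
  have h2 : (0:ℝ) < a₂ ^ 2 + mu := by positivity
  have h3 : (0:ℝ) < a₁ ^ 2 := by positivity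
  have h4 : (0:ℝ) < a₂ ^ 2 := by positivity
  obtain ⟨d1, hd1def⟩ : ∃ d1 : ℝ, d1 = (a₁ ^ 2 + mu)⁻¹ := ⟨_, rfl⟩
  obtain ⟨d2, hd2def⟩ : ∃ d2 : ℝ, d2 = (a₂ ^ 2 + mu)⁻¹ := ⟨_, rfl⟩
  obtain ⟨m1, hm1def⟩ : ∃ m1 : ℝ, m1 = (a₁ ^ 2)⁻¹ := ⟨_, rfl⟩
  obtain ⟨m2, hm2def⟩ : ∃ m2 : ℝ, m2 = (a₂ ^ 2)⁻¹ := ⟨_, rfl⟩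
  have hd1 : d1 * (a₁ ^ 2 + mu) = 1 := by rw [hd1def]; exact inv_mul_cancel₀ h1.ne'
  have hd2 : d2 * (a₂ ^ 2 + mu) = 1 := by rw [hd2def]; exact inv_mul_cancel₀ h2.ne'
  have hm1 : m1 * a₁ ^ 2 = 1 := by rw [hm1def]; exact inv_mul_cancel₀ h3.ne'
  have hm2 : m2 * a₂ ^ 2 = 1 := by rw [hm2def]; exact inv_mul_cancel₀ h4.ne'
  have hd1pos : 0 < d1 := by rw [hd1def]; exact inv_pos.mpr h1
  have hd2pos : 0 < d2 := by rw [hd2def]; exact inv_pos.mpr h2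
  have hm1pos : 0 < m1 := by rw [hm1def]; exact inv_pos.mpr h3
  have hm2pos : 0 < m2 := by rw [hm2def]; exact inv_pos.mpr h4
  have f4 : d1 * p0 ^ 2 + d2 * p1 ^ 2 = 1 := by
    rw [hd1def, hd2def]; rw [div_eq_mul_inv, div_eq_mul_inv] at hP; linarith [hP]
  have hA' : m1 * A0 ^ 2 + m2 * A1 ^ 2 = 1 := by
    rw [hm1def, hm2def]; rw [div_eq_mul_inv, div_eq_mul_inv] at hA; linarith [hA]
  have htan' : (p0 - A0) * (A0 * m1) + (p1 - A1) * (A1 * m2) = 0 := by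
    rw [hm1def, hm2def]; rw [div_eq_mul_inv, div_eq_mul_inv] at htan; linarith [htan]
  obtain ⟨x, hxdef⟩ : ∃ x : ℝ, x = A0 * m1 := ⟨_, rfl⟩
  obtain ⟨y, hydef⟩ : ∃ y : ℝ, y = A1 * m2 := ⟨_, rfl⟩
  obtain ⟨u1, hu1⟩ : ∃ u1 : ℝ, u1 = A0 - p0 := ⟨_, rfl⟩
  obtain ⟨u2, hu2⟩ : ∃ u2 : ℝ, u2 = A1 - p1 := ⟨_, rfl⟩
  have f1 : u1 * x + u2 * y = 0 := by rw [hu1, hu2, hxdef, hydef]; linarith [htan']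
  have f2 : p0 * x + p1 * y = 1 := by
    have hxy : A0 * x + A1 * y = 1 := by rw [hxdef, hydef]; linear_combination hA'
    rw [hxdef, hydef]; rw [hxdef, hydef] at f1 hxy
    linear_combination hxy - f1 + (A0 * m1) * hu1 + (A1 * m2) * hu2
  have f3 : a₁ ^ 2 * x ^ 2 + a₂ ^ 2 * y ^ 2 = 1 := by
    rw [hxdef, hydef]
    linear_combination A0 ^ 2 * m1 * hm1 + A1 ^ 2 * m2 * hm2 + hA'
  have f5 : d2 - d1 = (a₁ ^ 2 - a₂ ^ 2) * (d1 * d2) := by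
    linear_combination d1 * hd2 - d2 * hd1
  have hQ1 : a₁ ^ 2 * x ^ 2 + a₂ ^ 2 * y ^ 2 - (p0 * x + p1 * y) ^ 2 = 0 := by
    linear_combination f3 + (-(p0 * x + p1 * y) - 1) * f2
  have hQ : (d2 * p1 * x - d1 * p0 * y) ^ 2
      = (d1 * d2 * p0 ^ 2 + d2 ^ 2 * p1 ^ 2 - d1 * d2 * a₁ ^ 2) * (x ^ 2 + y ^ 2) := by
    linear_combination (d1 * d2) * hQ1 - y ^ 2 * (d2 - d1) * f4 - y ^ 2 * f5
  have f2sq : (p0 * x + p1 * y) ^ 2 = 1 := by rw [f2]; norm_num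
  have hS : 0 < x ^ 2 + y ^ 2 := by
    by_contra h
    push_neg at h
    have hx2 : x ^ 2 = 0 := le_antisymm (by linarith [sq_nonneg y]) (sq_nonneg x)
    have hy2 : y ^ 2 = 0 := le_antisymm (by linarith [sq_nonneg x]) (sq_nonneg y)
    have hx0 : x = 0 := by exact pow_eq_zero_iff (by norm_num) |>.mp hx2
    have hy0 : y = 0 := by exact pow_eq_zero_iff (by norm_num) |>.mp hy2
    rw [hx0, hy0] at f2
    norm_num at f2
  have hBig : (x ^ 2 + y ^ 2) ^ 2 *
      ((u1 * (d1 * p0) + u2 * (d2 * p1)) ^ 2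
        - (d1 * d2 * p0 ^ 2 + d2 ^ 2 * p1 ^ 2 - d1 * d2 * a₁ ^ 2) * (u1 ^ 2 + u2 ^ 2)) = 0 := by
    linear_combination
      ((u1 * x + u2 * y) * (d1 * p0 * x + d2 * p1 * y) ^ 2
        - 2 * (d1 * p0 * x + d2 * p1 * y) * (u1 * y - u2 * x) * (d2 * p1 * x - d1 * p0 * y)
        - (u1 * x + u2 * y) * (d2 * p1 * x - d1 * p0 * y) ^ 2) * f1
      + ((u1 * x + u2 * y) ^ 2 + (u1 * y - u2 * x) ^ 2) * hQ
  have key1 : (u1 * (d1 * p0) + u2 * (d2 * p1)) ^ 2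
      = (d1 * d2 * p0 ^ 2 + d2 ^ 2 * p1 ^ 2 - d1 * d2 * a₁ ^ 2) * (u1 ^ 2 + u2 ^ 2) := by
    have hSne : ((x ^ 2 + y ^ 2) ^ 2 : ℝ) ≠ 0 := pow_ne_zero 2 hS.ne'
    rcases mul_eq_zero.mp hBig with h | h
    · exact absurd h hSne
    · linarith [sub_eq_zero.mp h]
  -- nonpositivity of the inner product
  have hdm1 : d1 ≤ m1 := by
    rw [hd1def, hm1def]
    exact inv_anti₀ h3 (by linarith)
  have hdm2 : d2 ≤ m2 := by
    rw [hd2def, hm2def]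
    exact inv_anti₀ h4 (by linarith)
  have key2 : u1 * (d1 * p0) + u2 * (d2 * p1) ≤ 0 := by
    have e1 : u1 * (d1 * p0) + u2 * (d2 * p1) = d1 * A0 * p0 + d2 * A1 * p1 - 1 := by
      rw [hu1, hu2]; linear_combination -f4
    rw [e1]
    exact ip_nonpos d1 d2 m1 m2 A0 A1 p0 p1 hd1pos hd2pos hdm1 hdm2 f4 hA'
  -- positivity of the squared distance
  have key3 : 0 < u1 ^ 2 + u2 ^ 2 := by
    by_contra h
    push_neg at h
    have h12 : u1 ^ 2 = 0 := le_antisymm (by linarith [sq_nonneg u2]) (sq_nonneg u1)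
    have h22 : u2 ^ 2 = 0 := le_antisymm (by linarith [sq_nonneg u1]) (sq_nonneg u2)
    have h10 : u1 = 0 := by exact pow_eq_zero_iff (by norm_num) |>.mp h12
    have h20 : u2 = 0 := by exact pow_eq_zero_iff (by norm_num) |>.mp h22
    rw [h10] at hu1; rw [h20] at hu2
    have e0 : p0 = A0 := by linarith
    have e1 : p1 = A1 := by linarith
    rw [e0, e1] at f4
    have hm1d1 : d1 < m1 := by
      rw [hd1def, hm1def]
      exact inv_strictAnti₀ h3 (by linarith)
    have hm2d2 : d2 < m2 := by
      rw [hd2def, hm2def]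
      exact inv_strictAnti₀ h4 (by linarith)
    exact ellipses_disjoint d1 d2 m1 m2 A0 A1 hm1d1 hm2d2 f4 hA'
  refine ⟨?_, ?_, ?_⟩
  · have e : (A0 - p0) * (p0 / (a₁ ^ 2 + mu)) + (A1 - p1) * (p1 / (a₂ ^ 2 + mu))
        = u1 * (d1 * p0) + u2 * (d2 * p1) := by
      rw [hu1, hu2, hd1def, hd2def, div_eq_mul_inv, div_eq_mul_inv]; ring
    rw [e, key1, hu1, hu2, hd1def, hd2def]
  · have e : (A0 - p0) * (p0 / (a₁ ^ 2 + mu)) + (A1 - p1) * (p1 / (a₂ ^ 2 + mu))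
        = u1 * (d1 * p0) + u2 * (d2 * p1) := by
      rw [hu1, hu2, hd1def, hd2def, div_eq_mul_inv, div_eq_mul_inv]; ring
    rw [e]; exact key2
  · rw [hu1, hu2] at key3; exact key3

lemma nonpos_sq_eq (a b : ℝ) (ha : a ≤ 0) (hb : b ≤ 0) (h : a ^ 2 = b ^ 2) : a = b := by
  have h' : (a - b) * (a + b) = 0 := by linear_combination h
  rcases mul_eq_zero.mp h' with h'' | h''
  · linarith
  · linarith

open RealInnerProductSpace

theorem confocal_tangent_segments_equal_angles
    (a₁ a₂ mu : ℝ) (ha : a₂ < a₁) (ha₂ : 0 < a₂) (hmu : 0 < mu)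
    (P A B N : EuclideanSpace ℝ (Fin 2))
    (hP : (P 0) ^ 2 / (a₁ ^ 2 + mu) + (P 1) ^ 2 / (a₂ ^ 2 + mu) = 1)
    (hAγ : (A 0) ^ 2 / a₁ ^ 2 + (A 1) ^ 2 / a₂ ^ 2 = 1)
    (hBγ : (B 0) ^ 2 / a₁ ^ 2 + (B 1) ^ 2 / a₂ ^ 2 = 1)
    (hAB : A ≠ B)
    (htanA : (P 0 - A 0) * (A 0 / a₁ ^ 2) + (P 1 - A 1) * (A 1 / a₂ ^ 2) = 0)
    (htanB : (P 0 - B 0) * (B 0 / a₁ ^ 2) + (P 1 - B 1) * (B 1 / a₂ ^ 2) = 0)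
    (hN0 : N 0 = P 0 / (a₁ ^ 2 + mu)) (hN1 : N 1 = P 1 / (a₂ ^ 2 + mu)) :
    ⟪‖A - P‖⁻¹ • (A - P), N⟫ = ⟪‖B - P‖⁻¹ • (B - P), N⟫ := by
  obtain ⟨kA, sA, pA⟩ := confocal_aux a₁ a₂ mu (P 0) (P 1) (A 0) (A 1) ha ha₂ hmu hP hAγ htanA
  obtain ⟨kB, sB, pB⟩ := confocal_aux a₁ a₂ mu (P 0) (P 1) (B 0) (B 1) ha ha₂ hmu hP hBγ htanB
  have hsubA : ∀ i, (A - P) i = A i - P i := fun i => rfl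
  have hsubB : ∀ i, (B - P) i = B i - P i := fun i => rfl
  have hinA : ⟪A - P, N⟫ = (A 0 - P 0) * (P 0 / (a₁ ^ 2 + mu)) + (A 1 - P 1) * (P 1 / (a₂ ^ 2 + mu)) := by
    simp [PiLp.inner_apply, Fin.sum_univ_two, RCLike.inner_apply, conj_trivial, hsubA, hN0, hN1]
    ring
  have hinB : ⟪B - P, N⟫ = (B 0 - P 0) * (P 0 / (a₁ ^ 2 + mu)) + (B 1 - P 1) * (P 1 / (a₂ ^ 2 + mu)) := by
    simp [PiLp.inner_apply, Fin.sum_univ_two, RCLike.inner_apply, conj_trivial, hsubB, hN0, hN1]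
    ring
  have hnA : ‖A - P‖ = Real.sqrt ((A 0 - P 0) ^ 2 + (A 1 - P 1) ^ 2) := by
    rw [EuclideanSpace.norm_eq]
    simp [Fin.sum_univ_two, hsubA, Real.norm_eq_abs, sq_abs]
  have hnB : ‖B - P‖ = Real.sqrt ((B 0 - P 0) ^ 2 + (B 1 - P 1) ^ 2) := by
    rw [EuclideanSpace.norm_eq]
    simp [Fin.sum_univ_two, hsubB, Real.norm_eq_abs, sq_abs]
  rw [real_inner_smul_left, real_inner_smul_left, hinA, hinB, hnA, hnB]
  set IA : ℝ := (A 0 - P 0) * (P 0 / (a₁ ^ 2 + mu)) + (A 1 - P 1) * (P 1 / (a₂ ^ 2 + mu)) with hIA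
  set IB : ℝ := (B 0 - P 0) * (P 0 / (a₁ ^ 2 + mu)) + (B 1 - P 1) * (P 1 / (a₂ ^ 2 + mu)) with hIB
  set LA : ℝ := (A 0 - P 0) ^ 2 + (A 1 - P 1) ^ 2 with hLA
  set LB : ℝ := (B 0 - P 0) ^ 2 + (B 1 - P 1) ^ 2 with hLB
  have hsA : 0 < Real.sqrt LA := Real.sqrt_pos.mpr pA
  have hsB : 0 < Real.sqrt LB := Real.sqrt_pos.mpr pB
  have hsA2 : Real.sqrt LA ^ 2 = LA := Real.sq_sqrt pA.le
  have hsB2 : Real.sqrt LB ^ 2 = LB := Real.sq_sqrt pB.le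
  have hsq : (IA * Real.sqrt LB) ^ 2 = (IB * Real.sqrt LA) ^ 2 := by
    rw [mul_pow, mul_pow, hsA2, hsB2, kA, kB]
    ring
  have key : IA * Real.sqrt LB = IB * Real.sqrt LA :=
    nonpos_sq_eq _ _ (mul_nonpos_of_nonpos_of_nonneg sA (Real.sqrt_nonneg _))
      (mul_nonpos_of_nonpos_of_nonneg sB (Real.sqrt_nonneg _)) hsq
  rw [inv_mul_eq_div, inv_mul_eq_div, div_eq_div_iff hsA.ne' hsB.ne']
  linarith [key]
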